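/- Let X be exponentially distributed with parameter λ > 0, i.e., with density f(x) = λ e^{-λx} for x > 0. Then for all t ≥ 0 the weighted residual entropy of X equals H^w(t) = t + 2/λ - (t + 1/λ) log λ. Consequently, H^w(t) is decreasing in t if and only if λ ≥ e, and increasing in t if and only if 0 < λ ≤ e. -/

import Mathlib

open MeasureTheory

/-- Survival function `F̄(t) = ∫_t^∞ f(x) dx` of a density `f`. -/
noncomputable def survFn (f : ℝ → ℝ) (t : ℝ) : ℝ := ∫ x in Set.Ioi t, f x

/-- Distribution function `F(t) = ∫_{-∞}^t f(x) dx` of a density `f`. -/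
noncomputable def distFn (f : ℝ → ℝ) (t : ℝ) : ℝ := ∫ x in Set.Iic t, f x

/-- Residual entropy `H(t) = -∫_t^∞ (f(x)/F̄(t)) log (f(x)/F̄(t)) dx`. -/
noncomputable def resEnt (f : ℝ → ℝ) (t : ℝ) : ℝ :=
  -∫ x in Set.Ioi t, f x / survFn f t * Real.log (f x / survFn f t)

/-- Weighted residual entropy `H^w(t) = -∫_t^∞ x (f(x)/F̄(t)) log (f(x)/F̄(t)) dx`. -/
noncomputable def wResEnt (f : ℝ → ℝ) (t : ℝ) : ℝ :=
  -∫ x in Set.Ioi t, x * (f x / survFn f t) * Real.log (f x / survFn f t)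

/-- Past entropy `H̄(t) = -∫_0^t (f(x)/F(t)) log (f(x)/F(t)) dx`. -/
noncomputable def pastEnt (f : ℝ → ℝ) (t : ℝ) : ℝ :=
  -∫ x in Set.Ioc 0 t, f x / distFn f t * Real.log (f x / distFn f t)

/-- Weighted past entropy `H̄^w(t) = -∫_0^t x (f(x)/F(t)) log (f(x)/F(t)) dx`. -/
noncomputable def wPastEnt (f : ℝ → ℝ) (t : ℝ) : ℝ :=
  -∫ x in Set.Ioc 0 t, x * (f x / distFn f t) * Real.log (f x / distFn f t)

/-- The support `S = (0, ν)` (with `ν ≤ +∞`) as a subset of `ℝ`. -/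
def supS (ν : EReal) : Set ℝ := {x : ℝ | 0 < x ∧ (x : EReal) < ν}

/-- The density of the exponential distribution with parameter `l > 0`:
`f(x) = l e^{-l x}` for `x > 0`, and `0` otherwise. -/
noncomputable def expDens (l : ℝ) : ℝ → ℝ :=
  fun x => if 0 < x then l * Real.exp (-(l * x)) else 0

open Real Filter Set

lemma tendsto_poly_exp (c l : ℝ) (hl : 0 < l) (n : ℕ) :
    Tendsto (fun x : ℝ => x ^ n * Real.exp (c - l * x)) atTop (nhds 0) := by
  have h := tendsto_rpow_mul_exp_neg_mul_atTop_nhds_zero (n : ℝ) l hl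
  have h2 : Tendsto (fun x : ℝ => Real.exp c * (x ^ (n:ℝ) * Real.exp (-l * x))) atTop
      (nhds (Real.exp c * 0)) := h.const_mul _
  rw [mul_zero] at h2
  refine h2.congr' ?_
  filter_upwards [eventually_gt_atTop 0] with x hx
  rw [Real.rpow_natCast]
  rw [Real.exp_sub, neg_mul, Real.exp_neg]
  ring

lemma hasDerivAt_exp_lin (c l x : ℝ) :
    HasDerivAt (fun y : ℝ => Real.exp (c - l * y)) (-l * Real.exp (c - l * x)) x := by
  have h1 : HasDerivAt (fun y : ℝ => c - l * y) (-l) x := by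
    simpa using ((hasDerivAt_id x).const_mul l).const_sub c
  simpa [mul_comm, Function.comp_def] using (Real.hasDerivAt_exp (c - l * x)).comp x h1

lemma survFn_exp (l : ℝ) (hl : 0 < l) (t : ℝ) (ht : 0 ≤ t) :
    survFn (expDens l) t = Real.exp (-(l * t)) := by
  have hderiv : ∀ x ∈ Ici t, HasDerivAt (fun y : ℝ => -Real.exp (0 - l * y))
      (l * Real.exp (0 - l * x)) x := by
    intro x _
    have := (hasDerivAt_exp_lin 0 l x).neg
    exact this.congr_deriv (by ring)
  have hpos : ∀ x ∈ Ioi t, 0 ≤ l * Real.exp (0 - l * x) := fun x _ => by positivity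
  have hT : Tendsto (fun y : ℝ => -Real.exp (0 - l * y)) atTop (nhds 0) := by
    have := (tendsto_poly_exp 0 l hl 0).neg
    simp only [pow_zero, one_mul, neg_zero] at this
    exact this
  have key := integral_Ioi_of_hasDerivAt_of_nonneg' hderiv hpos hT
  unfold survFn
  rw [setIntegral_congr_fun measurableSet_Ioi
    (show EqOn (expDens l) (fun x => l * Real.exp (0 - l * x)) (Ioi t) by
      intro x hx
      have hx0 : 0 < x := lt_of_le_of_lt ht hx
      simp [expDens, if_pos hx0, zero_sub]), key]
  simp [zero_sub]

lemma wResEnt_exp (l : ℝ) (hl : 0 < l) (t : ℝ) (ht : 0 ≤ t) :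
    wResEnt (expDens l) t = t + 2 / l - (t + 1 / l) * Real.log l := by
  -- integral I1 : ∫ x in Ioi t, x * (l * exp (l t - l x)) = t + 1/l
  have hderiv1 : ∀ x ∈ Ici t, HasDerivAt (fun y : ℝ => -((y + 1/l) * Real.exp (l*t - l*y)))
      (x * (l * Real.exp (l*t - l*x))) x := by
    intro x _
    have h := (((hasDerivAt_id x).add_const (1/l)).mul (hasDerivAt_exp_lin (l*t) l x)).neg
    refine h.congr_deriv ?_
    simp only [id]
    field_simp
    ring
  have hpos1 : ∀ x ∈ Ioi t, 0 ≤ x * (l * Real.exp (l*t - l*x)) := by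
    intro x hx
    have hx0 : 0 ≤ x := le_trans ht (le_of_lt hx)
    positivity
  have hT1 : Tendsto (fun y : ℝ => -((y + 1/l) * Real.exp (l*t - l*y))) atTop (nhds 0) := by
    have h1 := tendsto_poly_exp (l*t) l hl 1
    have h0 := (tendsto_poly_exp (l*t) l hl 0).const_mul (1/l)
    have := (h1.add h0).neg
    simp only [mul_zero, add_zero, neg_zero, pow_one, pow_zero, one_mul] at this
    refine this.congr fun y => ?_
    ring
  have I1 := integral_Ioi_of_hasDerivAt_of_nonneg' hderiv1 hpos1 hT1
  have J1 := integrableOn_Ioi_deriv_of_nonneg' hderiv1 hpos1 hT1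
  rw [sub_self, Real.exp_zero] at I1
  have I1' : ∫ x in Ioi t, x * (l * Real.exp (l*t - l*x)) = t + 1/l := by
    rw [I1]; ring
  -- integral I2 : ∫ x in Ioi t, x * (l * exp (l t - l x)) * (l x - l t) = t + 2/l
  have hderiv2 : ∀ x ∈ Ici t, HasDerivAt
      (fun y : ℝ => -((l*y^2 + (2 - l*t)*y + (2 - l*t)/l) * Real.exp (l*t - l*y)))
      (x * (l * Real.exp (l*t - l*x)) * (l*x - l*t)) x := by
    intro x _
    have hp : HasDerivAt (fun y : ℝ => l*y^2 + (2 - l*t)*y + (2 - l*t)/l)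
        (l*(2*x) + (2 - l*t)) x := by
      have := (((hasDerivAt_pow 2 x).const_mul l).add
        (((hasDerivAt_id x).const_mul (2 - l*t)).add_const ((2 - l*t)/l)))
      refine (this.congr_deriv ?_).congr_of_eventuallyEq (Eventually.of_forall fun y => ?_)
      · push_cast; ring
      · simp only [Pi.add_apply, id]; ring
    have h := (hp.mul (hasDerivAt_exp_lin (l*t) l x)).neg
    refine h.congr_deriv ?_
    field_simp
    ring
  have hpos2 : ∀ x ∈ Ioi t, 0 ≤ x * (l * Real.exp (l*t - l*x)) * (l*x - l*t) := by
    intro x hx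
    have hx0 : 0 ≤ x := le_trans ht (le_of_lt hx)
    have hx1 : 0 ≤ l*x - l*t := by nlinarith [le_of_lt (mem_Ioi.mp hx)]
    positivity
  have hT2 : Tendsto (fun y : ℝ =>
      -((l*y^2 + (2 - l*t)*y + (2 - l*t)/l) * Real.exp (l*t - l*y))) atTop (nhds 0) := by
    have h2 := (tendsto_poly_exp (l*t) l hl 2).const_mul l
    have h1 := (tendsto_poly_exp (l*t) l hl 1).const_mul (2 - l*t)
    have h0 := (tendsto_poly_exp (l*t) l hl 0).const_mul ((2 - l*t)/l)
    have := ((h2.add h1).add h0).neg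
    simp only [mul_zero, add_zero, neg_zero, pow_one, pow_zero, one_mul] at this
    refine this.congr fun y => ?_
    ring
  have I2 := integral_Ioi_of_hasDerivAt_of_nonneg' hderiv2 hpos2 hT2
  have J2 := integrableOn_Ioi_deriv_of_nonneg' hderiv2 hpos2 hT2
  rw [sub_self, Real.exp_zero] at I2
  have I2' : ∫ x in Ioi t, x * (l * Real.exp (l*t - l*x)) * (l*x - l*t) = t + 2/l := by
    rw [I2]; field_simp; ring
  -- main computation
  unfold wResEnt
  rw [survFn_exp l hl t ht]
  have heq : EqOn
      (fun x => x * (expDens l x / Real.exp (-(l*t))) * Real.log (expDens l x / Real.exp (-(l*t))))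
      (fun x => Real.log l * (x * (l * Real.exp (l*t - l*x)))
        - x * (l * Real.exp (l*t - l*x)) * (l*x - l*t)) (Ioi t) := by
    intro x hx
    have hx0 : 0 < x := lt_of_le_of_lt ht hx
    simp only [expDens, if_pos hx0]
    have harg : -(l*x) - -(l*t) = l*t - l*x := by ring
    have hratio : l * Real.exp (-(l*x)) / Real.exp (-(l*t)) = l * Real.exp (l*t - l*x) := by
      rw [mul_div_assoc, ← Real.exp_sub, harg]
    rw [hratio, Real.log_mul (ne_of_gt hl) (Real.exp_ne_zero _), Real.log_exp]
    ring
  rw [setIntegral_congr_fun measurableSet_Ioi heq,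
    integral_sub (J1.const_mul (Real.log l)) J2, integral_const_mul, I1', I2']
  ring

theorem exponential_wResEnt (l : ℝ) (hl : 0 < l) :
    (∀ t : ℝ, 0 ≤ t →
        wResEnt (expDens l) t = t + 2 / l - (t + 1 / l) * Real.log l)
    ∧ (AntitoneOn (wResEnt (expDens l)) (Set.Ici 0) ↔ Real.exp 1 ≤ l)
    ∧ (MonotoneOn (wResEnt (expDens l)) (Set.Ici 0) ↔ 0 < l ∧ l ≤ Real.exp 1) := by
  have F := wResEnt_exp l hl
  refine ⟨F, ⟨?_, ?_⟩, ⟨?_, ?_⟩⟩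
  · intro h
    have h01 : wResEnt (expDens l) 1 ≤ wResEnt (expDens l) 0 :=
      h (self_mem_Ici) (by norm_num) zero_le_one
    rw [F 0 le_rfl, F 1 zero_le_one] at h01
    have h1 : 1 ≤ Real.log l := by nlinarith
    exact (Real.le_log_iff_exp_le hl).mp h1
  · intro h s hs u hu hsu
    rw [F s hs, F u hu]
    have h1 : 1 ≤ Real.log l := (Real.le_log_iff_exp_le hl).mpr h
    nlinarith
  · intro h
    refine ⟨hl, ?_⟩
    have h01 : wResEnt (expDens l) 0 ≤ wResEnt (expDens l) 1 :=
      h (self_mem_Ici) (by norm_num) zero_le_one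
    rw [F 0 le_rfl, F 1 zero_le_one] at h01
    have h1 : Real.log l ≤ 1 := by nlinarith
    exact (Real.log_le_iff_le_exp hl).mp h1
  · rintro ⟨-, h⟩ s hs u hu hsu
    rw [F s hs, F u hu]
    have h1 : Real.log l ≤ 1 := (Real.log_le_iff_le_exp hl).mpr h
    nlinarith
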